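/- Consider the instance with n = h+s agents (all with identical additive valuations, no caps), h = s(k−1) goods of value K each, and h+s goods of value 1 each, one copy of each good, with integers K ≥ k ≥ 1, s ≥ 1. The allocation x where h agents each get one value-K good and one value-1 good, and s agents each get one value-1 good, satisfies NSW(OPT)/NSW(x) = (K/(K+1))^{(k−1)/k} · k^{1/k}, where OPT assigns a value-K good each to h agents and k value-1 goods each to the remaining s agents. In particular, for k = 3 and K = 666 this ratio exceeds 1.44. -/

import Mathlib

open Finset

lemma mydiv (x n a : ℕ) (hn : 0 < n) : x / n = a ↔ a * n ≤ x ∧ x < (a+1)*n := by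
  constructor
  · rintro rfl
    exact ⟨Nat.div_mul_le_self x n, (Nat.div_lt_iff_lt_mul hn).mp (Nat.lt_succ_self _)⟩
  · rintro ⟨h1, h2⟩
    have := (Nat.le_div_iff_mul_le hn).mpr h1
    have := (Nat.div_lt_iff_lt_mul hn).mpr h2
    omega

/-- Nash social welfare of an allocation of single-copy goods with identical
additive valuations given by `w`. -/
noncomputable def nswId {n : ℕ} {G : Type*} [Fintype G] (w : G → ℝ)
    (x : G → Fin n) : ℝ :=
  (∏ i, ∑ j ∈ univ.filter (fun j => x j = i), w j) ^ (1 / (n : ℝ))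

/-- The lower-bound instance: `n = h + s` agents with identical additive valuations,
`h = s(k−1)` goods of value `K` and `h + s` goods of value `1`, one copy each.
The algorithm's allocation `alg` gives each of the first `h` agents one value-`K` good
and one value-`1` good and each of the remaining `s` agents one value-`1` good; `opt`
gives a value-`K` good to each of the first `h` agents and `k` value-`1` goods to each
of the remaining `s` agents.  Then
`NSW(opt)/NSW(alg) = (K/(K+1))^((k−1)/k) · k^(1/k)`, and for `k = 3`, `K = 666`
this ratio exceeds `1.44`. -/
theorem lower_bound_instance (k K s h n : ℕ) (hk : 1 ≤ k) (hKk : k ≤ K)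
    (hs : 1 ≤ s) (hh : h = s * (k - 1)) (hn : n = h + s) :
    let w : Fin h ⊕ Fin (h + s) → ℝ := Sum.elim (fun _ => (K : ℝ)) fun _ => 1
    let alg : Fin h ⊕ Fin (h + s) → Fin n :=
      Sum.elim (fun t => Fin.castLE (by omega) t)
        (fun t => Fin.cast (by omega) t)
    let opt : Fin h ⊕ Fin (h + s) → Fin n :=
      Sum.elim (fun t => Fin.castLE (by omega) t)
        (fun t => ⟨h + t.val / k, by
          have ht : (t : ℕ) < s * k := by
            have := t.isLt
            have hsk : h + s = s * k := by
              subst hh; cases k with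
              | zero => omega
              | succ k' => simp [Nat.succ_sub_one]; ring
            omega
          have : (t : ℕ) / k < s := Nat.div_lt_of_lt_mul (by rwa [mul_comm] at ht)
          omega⟩)
    nswId w opt / nswId w alg =
        ((K : ℝ) / (K + 1)) ^ (((k : ℝ) - 1) / k) * (k : ℝ) ^ (1 / (k : ℝ)) ∧
      (k = 3 → K = 666 → 1.44 < nswId w opt / nswId w alg) := by
  intro w alg opt
  have hk0 : 0 < k := hk
  have hsk : h + s = s * k := by
    have h1 : k - 1 + 1 = k := by omega
    calc h + s = s * (k-1) + s * 1 := by rw [hh, mul_one]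
    _ = s * ((k-1)+1) := by ring
    _ = s * k := by rw [h1]
  have hnpos : 0 < n := by omega
  -- bundle values under alg
  have Salg : ∀ i : Fin n, (∑ j ∈ univ.filter (fun j => alg j = i), w j)
      = if i.val < h then (K:ℝ)+1 else 1 := by
    intro i
    rw [Finset.sum_filter, Fintype.sum_sum_type]
    simp only [w, alg, Sum.elim_inl, Sum.elim_inr, Fin.ext_iff, Fin.coe_castLE, Fin.coe_cast]
    rw [Fin.sum_univ_eq_sum_range (fun t => if t = i.val then (K:ℝ) else 0) h,
        Fin.sum_univ_eq_sum_range (fun t => if t = i.val then (1:ℝ) else 0) (h+s)]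
    rw [Finset.sum_ite_eq', Finset.sum_ite_eq']
    have hi : i.val < h + s := by have := i.isLt; omega
    simp only [mem_range, hi, if_true]
    split <;> simp_all
  -- bundle values under opt
  have Sopt : ∀ i : Fin n, (∑ j ∈ univ.filter (fun j => opt j = i), w j)
      = if i.val < h then (K:ℝ) else (k:ℝ) := by
    intro i
    rw [Finset.sum_filter, Fintype.sum_sum_type]
    simp only [w, opt, Sum.elim_inl, Sum.elim_inr, Fin.ext_iff, Fin.coe_castLE]
    rw [Fin.sum_univ_eq_sum_range (fun t => if t = i.val then (K:ℝ) else 0) h,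
        Fin.sum_univ_eq_sum_range (fun t => if h + t / k = i.val then (1:ℝ) else 0) (h+s)]
    rw [Finset.sum_ite_eq', Finset.sum_boole]
    by_cases hi : i.val < h
    · have he : (range (h+s)).filter (fun t => h + t / k = i.val) = ∅ := by
        ext t; simp only [mem_filter, mem_range, notMem_empty, iff_false]
        rintro ⟨-, ht⟩
        have : h ≤ h + t / k := Nat.le_add_right _ _
        omega
      simp [hi, he]
    · have hilt : i.val < h + s := by have := i.isLt; omega
      set j := i.val - h with hj
      have hjs : j < s := by omega
      have hjk : (j+1)*k ≤ s*k := Nat.mul_le_mul_right k (by omega)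
      have he : (range (h+s)).filter (fun t => h + t / k = i.val) = Ico (j*k) ((j+1)*k) := by
        ext t
        simp only [mem_filter, mem_range, mem_Ico]
        constructor
        · rintro ⟨-, ht⟩
          have : t / k = j := by omega
          exact (mydiv t k j hk0).mp this
        · intro hb
          have hdd : t / k = j := (mydiv t k j hk0).mpr hb
          refine ⟨by omega, by omega⟩
      rw [he]
      simp only [hi, if_false, Nat.card_Ico, Finset.mem_range]
      have : (j+1)*k - j*k = k := by rw [add_mul, one_mul]; omega
      rw [this, zero_add]
  -- products
  have Palg : (∏ i : Fin n, ∑ j ∈ univ.filter (fun j => alg j = i), w j) = ((K:ℝ)+1)^h := by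
    have p1 : ∏ x ∈ range h, (if x < h then (K:ℝ)+1 else 1) = ((K:ℝ)+1)^h := by
      rw [Finset.prod_congr rfl (fun t ht => if_pos (mem_range.mp ht)),
          Finset.prod_const, card_range]
    have p2 : ∏ x ∈ range s, (if h + x < h then (K:ℝ)+1 else 1) = 1 := by
      rw [Finset.prod_congr rfl (fun t ht => if_neg (by omega)),
          Finset.prod_const, one_pow]
    rw [Finset.prod_congr rfl (fun i _ => Salg i),
        Fin.prod_univ_eq_prod_range (fun t => if t < h then (K:ℝ)+1 else 1) n, hn,
        Finset.prod_range_add, p1, p2, mul_one]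
  have Popt : (∏ i : Fin n, ∑ j ∈ univ.filter (fun j => opt j = i), w j)
      = (K:ℝ)^h * (k:ℝ)^s := by
    have p1 : ∏ x ∈ range h, (if x < h then (K:ℝ) else (k:ℝ)) = (K:ℝ)^h := by
      rw [Finset.prod_congr rfl (fun t ht => if_pos (mem_range.mp ht)),
          Finset.prod_const, card_range]
    have p2 : ∏ x ∈ range s, (if h + x < h then (K:ℝ) else (k:ℝ)) = (k:ℝ)^s := by
      rw [Finset.prod_congr rfl (fun t ht => if_neg (by omega)),
          Finset.prod_const, card_range]
    rw [Finset.prod_congr rfl (fun i _ => Sopt i),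
        Fin.prod_univ_eq_prod_range (fun t => if t < h then (K:ℝ) else (k:ℝ)) n, hn,
        Finset.prod_range_add, p1, p2]
  have hK0 : (0:ℝ) < K := by exact_mod_cast lt_of_lt_of_le hk0 hKk
  have hK1 : (0:ℝ) < (K:ℝ)+1 := by linarith
  have hkR : (0:ℝ) < (k:ℝ) := by exact_mod_cast hk0
  have hmain : nswId w opt / nswId w alg =
      ((K : ℝ) / (K + 1)) ^ (((k : ℝ) - 1) / k) * (k : ℝ) ^ (1 / (k : ℝ)) := by
    rw [nswId, nswId, Popt, Palg, ← Real.div_rpow (by positivity) (by positivity)]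
    have h1 : (K:ℝ)^h * (k:ℝ)^s / ((K:ℝ)+1)^h = ((K:ℝ)/((K:ℝ)+1))^h * (k:ℝ)^s := by
      rw [div_pow]; ring
    rw [h1, Real.mul_rpow (by positivity) (by positivity),
        ← Real.rpow_natCast ((K:ℝ)/((K:ℝ)+1)) h, ← Real.rpow_natCast (k:ℝ) s,
        ← Real.rpow_mul (by positivity), ← Real.rpow_mul (by positivity)]
    have hhR : (h:ℝ) = (s:ℝ) * ((k:ℝ) - 1) := by
      rw [hh]; push_cast [Nat.cast_sub hk]; ring
    have hnR : (n:ℝ) = (s:ℝ) * (k:ℝ) := by rw [hn]; exact_mod_cast congrArg Nat.cast hsk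
    have hsR : (0:ℝ) < (s:ℝ) := by exact_mod_cast hs
    have e1 : (h:ℝ) * (1/(n:ℝ)) = ((k:ℝ)-1)/(k:ℝ) := by
      rw [hhR, hnR]; field_simp
    have e2 : (s:ℝ) * (1/(n:ℝ)) = 1/(k:ℝ) := by
      rw [hnR]; field_simp
    rw [e1, e2]
  refine ⟨hmain, fun hk3 hK666 => ?_⟩
  rw [hmain]
  subst hk3 hK666
  push_cast
  have e3 : ((3:ℝ)-1)/3 = 2/3 := by norm_num
  have e4 : ((3:ℝ)+1) = 4 := by norm_num
  rw [show ((666:ℝ)+1) = 667 by norm_num, e3]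
  have ha : (0:ℝ) ≤ (666:ℝ)/667 := by norm_num
  apply lt_of_pow_lt_pow_left₀ 3 (by positivity)
  rw [mul_pow]
  have h2 : (((666:ℝ)/667) ^ ((2:ℝ)/3)) ^ (3:ℕ) = ((666:ℝ)/667) ^ (2:ℕ) := by
    rw [← Real.rpow_natCast (((666:ℝ)/667) ^ ((2:ℝ)/3)) 3, ← Real.rpow_mul ha,
        show ((2:ℝ)/3) * ((3:ℕ):ℝ) = ((2:ℕ):ℝ) by norm_num, Real.rpow_natCast]
  have h3 : (((3:ℝ)) ^ ((1:ℝ)/3)) ^ (3:ℕ) = (3:ℝ) := by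
    rw [← Real.rpow_natCast (((3:ℝ)) ^ ((1:ℝ)/3)) 3, ← Real.rpow_mul (by norm_num),
        show ((1:ℝ)/3) * ((3:ℕ):ℝ) = ((1:ℕ):ℝ) by norm_num, Real.rpow_natCast, pow_one]
  rw [h2, h3]
  norm_num
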